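/- For every real number α there exists a nonzero real scalar c such that c • (C_∞ · exp(α•B)) belongs to the set 𝒞 of applicable projections; that is, every member of the one-parameter camera family C_α := C_∞ · exp(α•B) is (up to the scalar equivalence of projection matrices) an applicable projection. -/

import Mathlib

open Matrix

/-- The null-polarity matrix used in Cremona's method. -/
def Bmat : Matrix (Fin 4) (Fin 4) ℝ :=
  !![0, -1, 0, 0;
     1,  0, 0, 0;
     0,  0, 0, -1;
     0,  0, 1, 0]

/-- Parallel projection along the z-axis, in homogeneous coordinates. -/
def Cinf : Matrix (Fin 3) (Fin 4) ℝ :=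
  !![1, 0, 0, 0;
     0, 1, 0, 0;
     0, 0, 0, 1]

/-- The basic finite pinhole camera with focal distance `φ`. -/
noncomputable def Cfin (φ : ℝ) : Matrix (Fin 3) (Fin 4) ℝ :=
  !![1, 0, 0, 0;
     0, 1, 0, 0;
     0, 0, φ⁻¹, 0]

/-- The rigid-motion matrix with rotation block `R` and translation column `t`. -/
def Mblock (R : Matrix (Fin 3) (Fin 3) ℝ) (t : Fin 3 → ℝ) : Matrix (Fin 4) (Fin 4) ℝ :=
  Matrix.reindex finSumFinEquiv finSumFinEquiv
    (Matrix.fromBlocks R (Matrix.replicateCol (Fin 1) t)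
      (0 : Matrix (Fin 1) (Fin 3) ℝ) (1 : Matrix (Fin 1) (Fin 1) ℝ))

/-- The set `𝒞` of applicable projections: finite pinhole cameras and parallel
projections. -/
def applicableProjections : Set (Matrix (Fin 3) (Fin 4) ℝ) :=
  {C | (∃ φ : ℝ, φ ≠ 0 ∧ ∃ R ∈ Matrix.specialOrthogonalGroup (Fin 3) ℝ, ∃ t : Fin 3 → ℝ,
          C = Cfin φ * Mblock R t) ∨
       (∃ ψ : ℝ, ψ ≠ 0 ∧ ∃ R ∈ Matrix.specialOrthogonalGroup (Fin 3) ℝ, ∃ t : Fin 3 → ℝ,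
          C = !![1, 0, 0; 0, ψ, 0; 0, 0, 1] * Cinf * Mblock R t)}



lemma Bmat_sq : Bmat * Bmat = -1 := by
  ext i j
  fin_cases i <;> fin_cases j <;>
    simp [Bmat, Matrix.mul_apply, Fin.sum_univ_four, Matrix.one_apply,
      Matrix.vecHead, Matrix.vecTail]

lemma exp_smul_B (α : ℝ) :
    NormedSpace.exp (α • Bmat) = Real.cos α • 1 + Real.sin α • Bmat := by
  letI : SeminormedRing (Matrix (Fin 4) (Fin 4) ℝ) := Matrix.linftyOpSemiNormedRing
  letI : NormedRing (Matrix (Fin 4) (Fin 4) ℝ) := Matrix.linftyOpNormedRing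
  letI : NormedAlgebra ℝ (Matrix (Fin 4) (Fin 4) ℝ) := Matrix.linftyOpNormedAlgebra
  have key : α • Bmat = Complex.liftAux Bmat Bmat_sq (α * Complex.I) := by
    simp [Complex.liftAux_apply]
  rw [key]
  erw [← NormedSpace.map_exp (Complex.liftAux Bmat Bmat_sq)
      (LinearMap.continuous_of_finiteDimensional
        (Complex.liftAux Bmat Bmat_sq).toLinearMap)]
  rw [show NormedSpace.exp (↑α * Complex.I) = Complex.exp (↑α * Complex.I) by
    rw [Complex.exp_eq_exp_ℂ]]
  rw [Complex.exp_mul_I]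
  simp [Complex.liftAux_apply, Algebra.algebraMap_eq_smul_one,
    Complex.cos_ofReal_re, Complex.sin_ofReal_re]

lemma Mblock_eq (R : Matrix (Fin 3) (Fin 3) ℝ) (t : Fin 3 → ℝ) :
    Mblock R t = !![R 0 0, R 0 1, R 0 2, t 0;
                    R 1 0, R 1 1, R 1 2, t 1;
                    R 2 0, R 2 1, R 2 2, t 2;
                    0, 0, 0, 1] := by
  ext i j
  fin_cases i <;> fin_cases j <;>
    simp [Mblock, Matrix.fromBlocks, finSumFinEquiv, Fin.addCases, Matrix.one_apply,
      Fin.castPred, Fin.castLT, Fin.subNat, Matrix.replicateCol,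
      (by decide : ¬((3 : Fin 4) : ℕ) < 3)]

lemma CA_eq (α : ℝ) :
    Cinf * NormedSpace.exp (α • Bmat) =
      !![Real.cos α, -Real.sin α, 0, 0;
         Real.sin α,  Real.cos α, 0, 0;
         0, 0, Real.sin α, Real.cos α] := by
  rw [exp_smul_B]
  ext i j
  fin_cases i <;> fin_cases j <;>
    simp [Cinf, Bmat, Matrix.mul_apply, Fin.sum_univ_four, Matrix.one_apply,
      Matrix.vecHead, Matrix.vecTail]

lemma rotz_mem (α : ℝ) :
    !![Real.cos α, -Real.sin α, 0;
       Real.sin α,  Real.cos α, 0;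
       0, 0, 1] ∈ Matrix.specialOrthogonalGroup (Fin 3) ℝ := by
  rw [Matrix.mem_specialOrthogonalGroup_iff]
  constructor
  · rw [Matrix.mem_orthogonalGroup_iff]
    ext i j
    fin_cases i <;> fin_cases j <;>
      simp [Matrix.mul_apply, Fin.sum_univ_three, Matrix.one_apply, star,
        Matrix.vecHead, Matrix.vecTail, Real.sin_sq_add_cos_sq, Real.cos_sq_add_sin_sq] <;>
      ring_nf <;>
      simp [Real.sin_sq_add_cos_sq, Real.cos_sq_add_sin_sq, mul_comm]
  · simp [Matrix.det_fin_three, Real.sin_sq_add_cos_sq, Real.cos_sq_add_sin_sq]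
    ring_nf
    simp [Real.sin_sq_add_cos_sq, Real.cos_sq_add_sin_sq]

lemma one_mem_SO3 : (1 : Matrix (Fin 3) (Fin 3) ℝ) ∈ Matrix.specialOrthogonalGroup (Fin 3) ℝ := by
  rw [Matrix.mem_specialOrthogonalGroup_iff]
  constructor
  · rw [Matrix.mem_orthogonalGroup_iff]; simp
  · simp

/-- For every real `α` there is a nonzero scalar `c` such that
`c • (C∞ * exp (α • B))` is an applicable projection: every member of the camera
family `C_α := C∞ * exp (α • B)` is, up to scalar equivalence, in `𝒞`. -/
theorem camera_family_applicable (α : ℝ) :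
    ∃ c : ℝ, c ≠ 0 ∧
      c • (Cinf * NormedSpace.exp (α • Bmat)) ∈ applicableProjections := by
  by_cases hs : Real.sin α = 0
  · -- parallel projection case
    have hc : Real.cos α ≠ 0 := by
      intro h
      have := Real.sin_sq_add_cos_sq α
      rw [hs, h] at this; norm_num at this
    refine ⟨Real.cos α, hc, Or.inr ⟨1, one_ne_zero, 1, one_mem_SO3, 0, ?_⟩⟩
    have hcc : Real.cos α * Real.cos α = 1 := by
      have := Real.sin_sq_add_cos_sq α
      rw [hs] at this; nlinarith [this]
    rw [CA_eq, Mblock_eq]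
    ext i j
    fin_cases i <;> fin_cases j <;>
      simp [Cinf, Matrix.mul_apply, Fin.sum_univ_four, Fin.sum_univ_three,
        Matrix.vecHead, Matrix.vecTail, hs, hcc]
  · -- finite pinhole case
    refine ⟨1, one_ne_zero,
      Or.inl ⟨(Real.sin α)⁻¹, inv_ne_zero hs,
        !![Real.cos α, -Real.sin α, 0; Real.sin α, Real.cos α, 0; 0, 0, 1],
        rotz_mem α, ![0, 0, Real.cos α / Real.sin α], ?_⟩⟩
    rw [CA_eq, Mblock_eq, one_smul]
    ext i j
    fin_cases i <;> fin_cases j <;>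
      simp [Cfin, Matrix.mul_apply, Fin.sum_univ_four,
        Matrix.vecHead, Matrix.vecTail, inv_inv] <;>
      field_simp
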